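/- arXiv:1404.6441 — 3 statements merged into one kernel-verified Lean document; each statement's English description precedes it below -/
import Mathlib

section
/- Let n be an even positive integer and H an r×n binary matrix whose columns generate F_2^r. Let A be the adjacency matrix of the Cayley graph of F_2^r with generating set the columns of H. Then the binary code generated by the rows of A is self-orthogonal, i.e., any two rows of A are orthogonal over F_2 (including each row with itself). -/
/-- For an r×n binary matrix H (n even, columns distinct, nonzero, generating
F_2^r), the adjacency matrix A of the Cayley graph of F_2^r with the columns of H as
generators generates a self-orthogonal code: any two rows of A are orthogonal over F_2. -/
theorem cayley_adjacency_self_orthogonal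
    (r n : ℕ) (hn : Even n) (hnpos : 0 < n)
    (H : Matrix (Fin r) (Fin n) (ZMod 2))
    (hdist : Function.Injective (fun j : Fin n => fun i : Fin r => H i j))
    (hnz : ∀ j : Fin n, (fun i : Fin r => H i j) ≠ 0)
    (hgen : Submodule.span (ZMod 2)
      (Set.range (fun j : Fin n => fun i : Fin r => H i j)) = ⊤)
    (S : Finset (Fin r → ZMod 2))
    (hS : S = Finset.image (fun j : Fin n => fun i : Fin r => H i j) Finset.univ)
    (A : Matrix (Fin r → ZMod 2) (Fin r → ZMod 2) (ZMod 2))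
    (hA : ∀ x y, A x y = if x + y ∈ S then 1 else 0) :
    ∀ x y : Fin r → ZMod 2, ∑ z : Fin r → ZMod 2, A x z * A y z = 0 := by
  have hvv : ∀ v : Fin r → ZMod 2, v + v = 0 := by
    intro v; funext i; simp only [Pi.add_apply, Pi.zero_apply]
    have : ∀ a : ZMod 2, a + a = 0 := by decide
    exact this _
  intro x y
  by_cases hxy : x = y
  · subst hxy
    have hsq : ∀ z, A x z * A x z = A x z := by
      intro z
      rw [hA]
      have : ∀ a : ZMod 2, a * a = a := by decide
      exact this _
    simp only [hsq]
    simp only [hA]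
    have hbij : Function.Bijective (fun z : Fin r → ZMod 2 => x + z) := by
      constructor
      · intro a b hab; simpa using hab
      · intro w; exact ⟨x + w, by show x + (x + w) = w; rw [← add_assoc, hvv, zero_add]⟩
    rw [Fintype.sum_bijective _ hbij _ (fun w => if w ∈ S then (1 : ZMod 2) else 0)
      (fun z => rfl)]
    rw [Finset.sum_boole]
    have hcS : S.card = n := by
      rw [hS, Finset.card_image_of_injective _ hdist, Finset.card_univ, Fintype.card_fin]
    have : Finset.filter (fun w => w ∈ S) Finset.univ = S := by
      ext w; simp
    rw [this, hcS]
    exact (ZMod.natCast_eq_zero_iff n 2).mpr hn.two_dvd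
  · apply Finset.sum_involution (fun z _ => x + y + z)
    · intro z _
      have h1 : A x (x + y + z) = A y z := by
        rw [hA, hA]
        have : x + (x + y + z) = y + z := by
          rw [← add_assoc, ← add_assoc, hvv, zero_add]
        rw [this]
      have h2 : A y (x + y + z) = A x z := by
        rw [hA, hA]
        have : y + (x + y + z) = x + z := by
          rw [add_comm x y, ← add_assoc, ← add_assoc, hvv, zero_add]
        rw [this]
      rw [h1, h2]
      have : ∀ a b : ZMod 2, a * b + b * a = 0 := by decide
      exact this _ _
    · intro z _ _
      intro hc
      apply hxy
      have h0 : x + y + z = 0 + z := by rw [zero_add]; exact hc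
      have hxy0 : x + y = 0 := add_right_cancel h0
      have := congrArg (· + y) hxy0
      simpa [add_assoc, hvv] using this
    · intro z _; exact Finset.mem_univ _
    · intro z _
      rw [← add_assoc, hvv, zero_add]
end

section
/- Let t < n and let S be a t-pseudo-border of the hypercube [n]. If S' is obtained from S by taking the symmetric difference with N(T) for a subset T ⊆ [n] with 2 ≤ |T| ≤ t−1, and n is even, then S' is also a t-pseudo-border. -/
/-- The neighbourhood of a subset `S` of `[n]` in the hypercube: all subsets of `[n]`
whose symmetric difference with `S` has exactly one element. -/
def hypercubeNbhd (n : ℕ) (S : Finset (Fin n)) : Finset (Finset (Fin n)) :=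
  Finset.univ.filter (fun T => (symmDiff S T).card = 1)

/-- A `t`-pseudo-border of the hypercube `[n]`: a family `S` of subsets of `[n]` with
`∅ ∈ S`, `|S ∩ N(T)|` even for every `T ⊆ [n]` with `|T| ≤ t - 1`, and every member of
`S` of size at most `t`. -/
def IsPseudoBorder (n t : ℕ) (S : Finset (Finset (Fin n))) : Prop :=
  ∅ ∈ S ∧
  (∀ T : Finset (Fin n), T.card ≤ t - 1 → Even ((S ∩ hypercubeNbhd n T).card)) ∧
  (∀ A ∈ S, A.card ≤ t)

lemma card_symmDiff_aux {α : Type*} [DecidableEq α] (s t : Finset α) :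
    (symmDiff s t).card + 2 * (s ∩ t).card = s.card + t.card := by
  have h1 : (s \ t).card + (s ∩ t).card = s.card := Finset.card_sdiff_add_card_inter s t
  have h2 : (t \ s).card + (t ∩ s).card = t.card := Finset.card_sdiff_add_card_inter t s
  have h3 : (symmDiff s t).card = (s \ t).card + (t \ s).card := by
    rw [symmDiff_def, Finset.sup_eq_union, Finset.card_union_of_disjoint disjoint_sdiff_sdiff]
  rw [Finset.inter_comm] at h2
  omega

lemma even_card_symmDiff {α : Type*} [DecidableEq α] {s t : Finset α}
    (hs : Even s.card) (ht : Even t.card) : Even (symmDiff s t).card := by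
  have := card_symmDiff_aux s t
  rw [Nat.even_iff] at *
  omega

lemma nbhd_eq_image (n : ℕ) (T : Finset (Fin n)) :
    hypercubeNbhd n T = Finset.univ.image (fun i : Fin n => symmDiff T {i}) := by
  ext V
  simp only [hypercubeNbhd, Finset.mem_filter, Finset.mem_univ, true_and,
    Finset.mem_image]
  constructor
  · intro h
    obtain ⟨i, hi⟩ := Finset.card_eq_one.mp h
    exact ⟨i, by rw [← hi, symmDiff_symmDiff_cancel_left]⟩
  · rintro ⟨i, rfl⟩
    rw [symmDiff_symmDiff_cancel_left, Finset.card_singleton]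

lemma even_card_nbhd_inter (n : ℕ) (hn : Even n) (T U : Finset (Fin n)) :
    Even ((hypercubeNbhd n T ∩ hypercubeNbhd n U).card) := by
  classical
  have hinj : Set.InjOn (fun i : Fin n => symmDiff T {i}) (Finset.univ : Finset (Fin n)) := by
    intro i _ j _ h
    simp only at h
    have h2 : symmDiff T (symmDiff T {i}) = symmDiff T (symmDiff T {j}) :=
      congrArg (fun X => symmDiff T X) h
    rw [symmDiff_symmDiff_cancel_left, symmDiff_symmDiff_cancel_left] at h2
    exact Finset.singleton_injective h2
  have key : hypercubeNbhd n T ∩ hypercubeNbhd n U =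
      (Finset.univ.filter (fun i : Fin n =>
        (symmDiff (symmDiff T {i}) U).card = 1)).image (fun i => symmDiff T {i}) := by
    rw [nbhd_eq_image]
    ext V
    simp only [Finset.mem_inter, Finset.mem_image, Finset.mem_filter, Finset.mem_univ,
      true_and, hypercubeNbhd, Finset.mem_filter]
    constructor
    · rintro ⟨⟨i, rfl⟩, h2⟩
      exact ⟨i, by rwa [symmDiff_comm] at h2, rfl⟩
    · rintro ⟨i, hi, rfl⟩
      exact ⟨⟨i, rfl⟩, by rwa [symmDiff_comm]⟩
  rw [key, Finset.card_image_of_injOn (fun i _ j _ h => hinj (by simp) (by simp) h)]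
  -- analyze the filter
  set D := symmDiff T U with hD
  have hfilter : ∀ i : Fin n, (symmDiff (symmDiff T {i}) U).card = 1 ↔
      (symmDiff {i} D).card = 1 := by
    intro i
    rw [symmDiff_comm T {i}, symmDiff_assoc, hD]
  simp only [hfilter]
  -- case on i ∈ D
  have hval : ∀ i : Fin n, (symmDiff ({i} : Finset (Fin n)) D).card =
      if i ∈ D then D.card - 1 else D.card + 1 := by
    intro i
    by_cases hi : i ∈ D
    · rw [if_pos hi]
      have : symmDiff ({i} : Finset (Fin n)) D = D.erase i := by
        ext x
        simp only [Finset.mem_symmDiff, Finset.mem_singleton, Finset.mem_erase]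
        constructor
        · rintro (⟨rfl, h⟩ | ⟨h1, h2⟩)
          · exact absurd hi h
          · exact ⟨fun e => h2 (e ▸ rfl), h1⟩
        · rintro ⟨h1, h2⟩
          exact Or.inr ⟨h2, fun e => h1 e⟩
      rw [this, Finset.card_erase_of_mem hi]
    · rw [if_neg hi]
      have : symmDiff ({i} : Finset (Fin n)) D = insert i D := by
        ext x
        simp only [Finset.mem_symmDiff, Finset.mem_singleton, Finset.mem_insert]
        constructor
        · rintro (⟨rfl, _⟩ | ⟨h1, _⟩)
          · exact Or.inl rfl
          · exact Or.inr h1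
        · rintro (rfl | h)
          · exact Or.inl ⟨rfl, hi⟩
          · exact Or.inr ⟨h, fun e => hi (e ▸ h)⟩
      rw [this, Finset.card_insert_of_notMem hi]
  rcases Nat.lt_trichotomy D.card 2 with h | h | h
  · obtain hc | hc : D.card = 0 ∨ D.card = 1 := by omega
    · -- D = ∅ : filter is univ
      have hDe : D = ∅ := Finset.card_eq_zero.mp hc
      have : (Finset.univ.filter (fun i : Fin n => (symmDiff ({i} : Finset (Fin n)) D).card = 1))
          = Finset.univ := by
        apply Finset.filter_true_of_mem
        intro i _
        rw [hval i, if_neg (by simp [hDe])]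
        omega
      rw [this]
      simpa using hn
    · -- D.card = 1 : filter empty
      have : (Finset.univ.filter (fun i : Fin n => (symmDiff ({i} : Finset (Fin n)) D).card = 1))
          = ∅ := by
        apply Finset.filter_false_of_mem
        intro i _
        rw [hval i]
        split <;> omega
      rw [this]
      simp
  · -- D.card = 2 : filter = D
    have : (Finset.univ.filter (fun i : Fin n => (symmDiff ({i} : Finset (Fin n)) D).card = 1))
        = D := by
      ext i
      simp only [Finset.mem_filter, Finset.mem_univ, true_and]
      rw [hval i]
      constructor
      · intro hi
        by_contra hni
        rw [if_neg hni] at hi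
        omega
      · intro hi
        rw [if_pos hi]
        omega
    rw [this, h]
    exact even_two
  · -- D.card ≥ 3 : filter empty
    have : (Finset.univ.filter (fun i : Fin n => (symmDiff ({i} : Finset (Fin n)) D).card = 1))
        = ∅ := by
      apply Finset.filter_false_of_mem
      intro i _
      rw [hval i]
      split <;> omega
    rw [this]
    simp

/-- If `n` is even, `t < n`, `S` is a `t`-pseudo-border of `[n]` and
`2 ≤ |T| ≤ t - 1`, then the symmetric difference `S Δ N(T)` is again a
`t`-pseudo-border. -/
theorem symmDiff_nbhd_pseudoBorder (n t : ℕ) (hn : Even n) (ht : t < n)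
    (S : Finset (Finset (Fin n))) (hS : IsPseudoBorder n t S)
    (T : Finset (Fin n)) (hT2 : 2 ≤ T.card) (hTt : T.card ≤ t - 1) :
    IsPseudoBorder n t (symmDiff S (hypercubeNbhd n T)) := by
  classical
  obtain ⟨hS0, hSeven, hSsize⟩ := hS
  have ht3 : 3 ≤ t := by omega
  refine ⟨?_, ?_, ?_⟩
  · -- ∅ ∈ S'
    rw [Finset.mem_symmDiff]
    left
    refine ⟨hS0, ?_⟩
    simp only [hypercubeNbhd, Finset.mem_filter, Finset.mem_univ, true_and]
    have he : symmDiff T (∅ : Finset (Fin n)) = T := by simp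
    rw [he]
    omega
  · intro U hU
    have hdist : symmDiff S (hypercubeNbhd n T) ∩ hypercubeNbhd n U =
        symmDiff (S ∩ hypercubeNbhd n U) (hypercubeNbhd n T ∩ hypercubeNbhd n U) := by
      simpa using inf_symmDiff_distrib_right S (hypercubeNbhd n T) (hypercubeNbhd n U)
    rw [hdist]
    exact even_card_symmDiff (hSeven U hU) (even_card_nbhd_inter n hn T U)
  · intro A hA
    rw [Finset.mem_symmDiff] at hA
    rcases hA with ⟨hA, _⟩ | ⟨hA, _⟩
    · exact hSsize A hA
    · simp only [hypercubeNbhd, Finset.mem_filter, Finset.mem_univ, true_and] at hA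
      have hsub : A ⊆ T ∪ symmDiff T A := by
        intro x hx
        rw [Finset.mem_union, Finset.mem_symmDiff]
        by_cases hxT : x ∈ T
        · exact Or.inl hxT
        · exact Or.inr (Or.inr ⟨hx, hxT⟩)
      have := Finset.card_le_card hsub
      have hle := Finset.card_union_le T (symmDiff T A)
      omega
end

section
/- Let n be even and t < n, and let S be a t-pseudo-border of [n] of minimum cardinality. Then for any family of subsets T_1, ..., T_m of [n], each with 2 ≤ |T_i| ≤ t−1, the family obtained from S by successively taking symmetric differences with N(T_1), ..., N(T_m) has cardinality at least |S|. -/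
lemma mem_hypercubeNbhd {n : ℕ} {T A : Finset (Fin n)} :
    A ∈ hypercubeNbhd n T ↔ (symmDiff T A).card = 1 := by
  simp [hypercubeNbhd]

lemma even_symmDiff_card {α : Type*} [DecidableEq α] {A B : Finset α}
    (hA : Even A.card) (hB : Even B.card) : Even ((symmDiff A B).card) := by
  have h1 : (A ∪ B).card + (A ∩ B).card = A.card + B.card :=
    Finset.card_union_add_card_inter A B
  have h3 : (A ∩ B) ⊆ (A ∪ B) := (Finset.inter_subset_left).trans Finset.subset_union_left
  have h2 : (symmDiff A B).card = (A ∪ B).card - (A ∩ B).card := by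
    rw [symmDiff_eq_sup_sdiff_inf]
    exact Finset.card_sdiff_of_subset h3
  have h4 := Finset.card_le_card h3
  rw [Nat.even_iff] at *
  omega

lemma even_card_of_invol {α : Type*} [DecidableEq α] (X : Finset α) (f : α → α)
    (hmem : ∀ a ∈ X, f a ∈ X) (hinv : ∀ a ∈ X, f (f a) = a)
    (hne : ∀ a ∈ X, f a ≠ a) : Even X.card := by
  induction X using Finset.strongInduction with
  | _ X ih =>
    rcases X.eq_empty_or_nonempty with h | ⟨a, ha⟩
    · simp [h]
    · have hfa : f a ∈ X := hmem a ha
      have hne' : f a ≠ a := hne a ha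
      set Y := X \ {a, f a} with hY
      have hsub : ({a, f a} : Finset α) ⊆ X := by
        simp [Finset.insert_subset_iff, ha, hfa]
      have hYss : Y ⊂ X := by
        refine Finset.sdiff_ssubset hsub ?_
        simp
      have hpair : ({a, f a} : Finset α).card = 2 := Finset.card_pair (Ne.symm hne')
      have hle : ({a, f a} : Finset α).card ≤ X.card := Finset.card_le_card hsub
      have hcard : X.card = Y.card + 2 := by
        rw [hY, Finset.card_sdiff_of_subset hsub]; omega
      have hEY : Even Y.card := by
        refine ih Y hYss ?_ ?_ ?_
        · intro b hb
          simp only [hY, Finset.mem_sdiff, Finset.mem_insert, Finset.mem_singleton] at hb ⊢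
          simp only [not_or] at hb
          obtain ⟨hbX, hba, hbfa⟩ := hb
          simp only [not_or]
          refine ⟨hmem b hbX, ?_, ?_⟩
          · intro h
            exact hbfa (by rw [← hinv b hbX, h])
          · intro h
            exact hba (by rw [← hinv b hbX, h, hinv a ha])
        · intro b hb
          exact hinv b ((Finset.sdiff_subset) hb)
        · intro b hb
          exact hne b ((Finset.sdiff_subset) hb)
      rw [hcard]
      exact hEY.add (by norm_num)

lemma card_hypercubeNbhd {n : ℕ} (T : Finset (Fin n)) :
    (hypercubeNbhd n T).card = n := by
  have : hypercubeNbhd n T = Finset.univ.image (fun i : Fin n => symmDiff T {i}) := by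
    ext A
    simp only [mem_hypercubeNbhd, Finset.mem_image, Finset.mem_univ, true_and]
    constructor
    · intro h
      obtain ⟨i, hi⟩ := Finset.card_eq_one.mp h
      exact ⟨i, by rw [← hi, symmDiff_symmDiff_cancel_left]⟩
    · rintro ⟨i, rfl⟩
      rw [symmDiff_symmDiff_cancel_left]
      simp
  rw [this, Finset.card_image_of_injective _ (fun i j hij => ?_), Finset.card_univ, Fintype.card_fin]
  have := symmDiff_right_injective T hij
  simpa using this

lemma even_inter_nbhd {n : ℕ} (hn : Even n) (T T' : Finset (Fin n)) :
    Even ((hypercubeNbhd n T ∩ hypercubeNbhd n T').card) := by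
  rcases eq_or_ne T T' with rfl | hne
  · rw [Finset.inter_self, card_hypercubeNbhd]; exact hn
  · set D := symmDiff T T' with hD
    have hDne : D ≠ ∅ := by
      rw [hD, ← Finset.bot_eq_empty, Ne, symmDiff_eq_bot]
      exact hne
    refine even_card_of_invol _ (fun A => symmDiff A D) ?_ ?_ ?_
    · intro A hA
      simp only [Finset.mem_inter, mem_hypercubeNbhd] at hA ⊢
      constructor
      · have : symmDiff T (symmDiff A D) = symmDiff T' A := by
          rw [hD]
          rw [symmDiff_comm A (symmDiff T T'), ← symmDiff_assoc, symmDiff_symmDiff_cancel_left]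
        rw [this]; exact hA.2
      · have : symmDiff T' (symmDiff A D) = symmDiff T A := by
          rw [hD, symmDiff_comm T T']
          rw [symmDiff_comm A (symmDiff T' T), ← symmDiff_assoc, symmDiff_symmDiff_cancel_left]
        rw [this]; exact hA.1
    · intro A _; exact symmDiff_symmDiff_cancel_right D A
    · intro A _
      rw [Ne, symmDiff_eq_left]
      simpa using hDne

lemma flip_pseudoBorder {n t : ℕ} (hn : Even n) {S : Finset (Finset (Fin n))}
    (hS : IsPseudoBorder n t S) {T : Finset (Fin n)} (hT2 : 2 ≤ T.card)
    (hTt : T.card ≤ t - 1) : IsPseudoBorder n t (symmDiff S (hypercubeNbhd n T)) := by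
  obtain ⟨hempty, hpar, hsize⟩ := hS
  have ht3 : 3 ≤ t := by omega
  refine ⟨?_, ?_, ?_⟩
  · rw [Finset.mem_symmDiff]
    left
    refine ⟨hempty, ?_⟩
    rw [mem_hypercubeNbhd]
    have : symmDiff T (∅ : Finset (Fin n)) = T := by simp
    rw [this]; omega
  · intro T' hT'
    have hdist : symmDiff S (hypercubeNbhd n T) ∩ hypercubeNbhd n T' =
        symmDiff (S ∩ hypercubeNbhd n T') (hypercubeNbhd n T ∩ hypercubeNbhd n T') :=
      inf_symmDiff_distrib_right _ _ _
    rw [hdist]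
    exact even_symmDiff_card (hpar T' hT') (even_inter_nbhd hn T T')
  · intro A hA
    rw [Finset.mem_symmDiff] at hA
    rcases hA with ⟨hA, _⟩ | ⟨hA, _⟩
    · exact hsize A hA
    · rw [mem_hypercubeNbhd] at hA
      have hsub : A ⊆ T ∪ symmDiff T A := by
        intro x hx
        rw [Finset.mem_union, Finset.mem_symmDiff]
        by_cases h : x ∈ T
        · exact Or.inl h
        · exact Or.inr (Or.inr ⟨hx, h⟩)
      have := Finset.card_le_card hsub
      have := Finset.card_union_le T (symmDiff T A)
      omega

/-- If `S` is a minimum-cardinality `t`-pseudo-border of `[n]` (`n` even,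
`t < n`), then successively flipping `S` along any sets `T_1, …, T_m` with
`2 ≤ |T_i| ≤ t - 1` yields a family of cardinality at least `|S|`. -/
theorem flip_min_pseudoBorder (n t : ℕ) (hn : Even n) (ht : t < n)
    (S : Finset (Finset (Fin n))) (hS : IsPseudoBorder n t S)
    (hmin : ∀ S' : Finset (Finset (Fin n)), IsPseudoBorder n t S' → S.card ≤ S'.card)
    (L : List (Finset (Fin n))) (hL : ∀ T ∈ L, 2 ≤ T.card ∧ T.card ≤ t - 1) :
    S.card ≤ (L.foldl (fun A T => symmDiff A (hypercubeNbhd n T)) S).card := by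
  suffices h : ∀ (L : List (Finset (Fin n))) (S' : Finset (Finset (Fin n))),
      IsPseudoBorder n t S' → (∀ T ∈ L, 2 ≤ T.card ∧ T.card ≤ t - 1) →
      IsPseudoBorder n t (L.foldl (fun A T => symmDiff A (hypercubeNbhd n T)) S') by
    exact hmin _ (h L S hS hL)
  intro L
  induction L with
  | nil => intro S' hS' _; exact hS'
  | cons T L ih =>
    intro S' hS' hL'
    simp only [List.foldl_cons]
    exact ih _ (flip_pseudoBorder hn hS' (hL' T (by simp)).1 (hL' T (by simp)).2)
      (fun T' hT' => hL' T' (by simp [hT']))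
end
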